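/- (Unbiased 0-1 loss) Write Z := 2Y − 1 and Z* := 2Y* − 1. Let the true 0-1 loss be L*(z*, ẑ) := 1 if (z* = 1 and ẑ < 0) or (z* = −1 and ẑ ≥ 0), and 0 otherwise, and let the reweighted loss be L(z, ẑ) := (1/p)·1{ẑ < 0} + (1 − 1/p)·1{ẑ ≥ 0} if z = 1, and 1{ẑ ≥ 0} if z = −1. Then for every fixed ẑ ∈ ℝ, E[L*(Z*, ẑ)] = E[L(Z, ẑ)]. -/

import Mathlib

open MeasureTheory
open scoped Classical

lemma integral_ite_mem {Ω : Type*} [MeasurableSpace Ω] (P : Measure Ω)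
    [IsProbabilityMeasure P] {s : Set Ω} (hs : MeasurableSet s) (a b : ℝ) :
    ∫ ω, (if ω ∈ s then a else b) ∂P = a * (P s).toReal + b * (1 - (P s).toReal) := by
  have h : (fun ω => if ω ∈ s then a else b)
      = fun ω => s.indicator (fun _ => a - b) ω + b := by
    funext ω; by_cases h : ω ∈ s <;> simp [Set.indicator, h]
  rw [h, integral_add ((integrable_const (a - b)).indicator hs) (integrable_const b),
    integral_indicator_const _ hs, integral_const]
  have : (P Set.univ).toReal = 1 := by simp
  rw [probReal_univ, measureReal_def]
  simp only [smul_eq_mul]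
  ring

/-- Unbiased 0-1 loss: with `Z = 2Y − 1`, `Z* = 2Y* − 1`, the true 0-1 loss
`L*(z*, ẑ) = 1` iff (`z* = 1` and `ẑ < 0`) or (`z* = −1` and `ẑ ≥ 0`), and the reweighted
loss `L(1, ẑ) = (1/p)·1{ẑ<0} + (1 − 1/p)·1{ẑ≥0}`, we have
`E[L*(Z*, ẑ)] = E[L(Z, ẑ)]` for every fixed `ẑ`. -/
theorem unbiased_zero_one_loss
    {Ω : Type*} [MeasurableSpace Ω] (P : Measure Ω) [IsProbabilityMeasure P]
    (Y Ystar : Ω → ℝ)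
    (hY : ∀ ω, Y ω = 0 ∨ Y ω = 1) (hYs : ∀ ω, Ystar ω = 0 ∨ Ystar ω = 1)
    (hmY : Measurable Y) (hmYs : Measurable Ystar)
    (p : ℝ) (hp0 : 0 < p) (hp1 : p ≤ 1)
    (hnofp : P {ω | Y ω = 1 ∧ Ystar ω = 0} = 0)
    (hpos : 0 < P {ω | Ystar ω = 1})
    (hprop : P {ω | Y ω = 1 ∧ Ystar ω = 1} = ENNReal.ofReal p * P {ω | Ystar ω = 1})
    (zhat : ℝ) :
    ∫ ω, (if (2 * Ystar ω - 1 = 1 ∧ zhat < 0) ∨ (2 * Ystar ω - 1 = -1 ∧ 0 ≤ zhat)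
          then (1 : ℝ) else 0) ∂P
      = ∫ ω, (if 2 * Y ω - 1 = 1
              then (if zhat < 0 then 1 / p else 1 - 1 / p)
              else (if 0 ≤ zhat then (1 : ℝ) else 0)) ∂P := by
  have hA : MeasurableSet {ω | Ystar ω = 1} := hmYs (measurableSet_singleton 1)
  have hB : MeasurableSet {ω | Y ω = 1} := hmY (measurableSet_singleton 1)
  -- P(Y=1) = P(Y=1 ∧ Y*=1)
  have hBsub : P {ω | Y ω = 1} = P {ω | Y ω = 1 ∧ Ystar ω = 1} := by
    apply le_antisymm
    · calc P {ω | Y ω = 1}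
          ≤ P ({ω | Y ω = 1 ∧ Ystar ω = 1} ∪ {ω | Y ω = 1 ∧ Ystar ω = 0}) := by
            refine measure_mono fun ω h => ?_
            rcases hYs ω with h0 | h1
            · exact Or.inr ⟨h, h0⟩
            · exact Or.inl ⟨h, h1⟩
      _ ≤ P {ω | Y ω = 1 ∧ Ystar ω = 1} + P {ω | Y ω = 1 ∧ Ystar ω = 0} :=
            measure_union_le _ _
      _ = P {ω | Y ω = 1 ∧ Ystar ω = 1} := by rw [hnofp, add_zero]
    · exact measure_mono fun ω h => h.1
  have hPBr : (P {ω | Y ω = 1}).toReal = p * (P {ω | Ystar ω = 1}).toReal := by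
    rw [hBsub, hprop, ENNReal.toReal_mul, ENNReal.toReal_ofReal hp0.le]
  have hpne : p ≠ 0 := hp0.ne'
  rcases lt_or_ge zhat 0 with hz | hz
  · -- zhat < 0
    have hL : ∫ ω, (if (2 * Ystar ω - 1 = 1 ∧ zhat < 0) ∨ (2 * Ystar ω - 1 = -1 ∧ 0 ≤ zhat)
          then (1 : ℝ) else 0) ∂P
        = ∫ ω, (if ω ∈ {ω | Ystar ω = 1} then (1 : ℝ) else 0) ∂P := by
      congr 1; funext ω
      have : (2 * Ystar ω - 1 = 1) ↔ Ystar ω = 1 := by constructor <;> intro h <;> linarith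
      simp [hz, hz.not_ge, this, Set.mem_setOf_eq]
    have hR : ∫ ω, (if 2 * Y ω - 1 = 1
              then (if zhat < 0 then 1 / p else 1 - 1 / p)
              else (if 0 ≤ zhat then (1 : ℝ) else 0)) ∂P
        = ∫ ω, (if ω ∈ {ω | Y ω = 1} then 1 / p else 0) ∂P := by
      congr 1; funext ω
      have : (2 * Y ω - 1 = 1) ↔ Y ω = 1 := by constructor <;> intro h <;> linarith
      simp [hz, hz.not_ge, this, Set.mem_setOf_eq]
    rw [hL, hR, integral_ite_mem P hA, integral_ite_mem P hB, hPBr]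
    field_simp
    ring
  · -- 0 ≤ zhat
    have hL : ∫ ω, (if (2 * Ystar ω - 1 = 1 ∧ zhat < 0) ∨ (2 * Ystar ω - 1 = -1 ∧ 0 ≤ zhat)
          then (1 : ℝ) else 0) ∂P
        = ∫ ω, (if ω ∈ {ω | Ystar ω = 1} then (0 : ℝ) else 1) ∂P := by
      congr 1; funext ω
      have h1 : (2 * Ystar ω - 1 = -1) ↔ Ystar ω = 0 := by constructor <;> intro h <;> linarith
      have h2 : Ystar ω = 0 ↔ ¬ Ystar ω = 1 := by
        rcases hYs ω with h | h <;> simp [h]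
      simp only [Set.mem_setOf_eq, hz.not_gt, and_false, false_or, h1, hz, and_true, h2]
      by_cases h : Ystar ω = 1 <;> simp [h]
    have hR : ∫ ω, (if 2 * Y ω - 1 = 1
              then (if zhat < 0 then 1 / p else 1 - 1 / p)
              else (if 0 ≤ zhat then (1 : ℝ) else 0)) ∂P
        = ∫ ω, (if ω ∈ {ω | Y ω = 1} then 1 - 1 / p else 1) ∂P := by
      congr 1; funext ω
      have : (2 * Y ω - 1 = 1) ↔ Y ω = 1 := by constructor <;> intro h <;> linarith
      simp [hz, hz.not_gt, this, Set.mem_setOf_eq]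
    rw [hL, hR, integral_ite_mem P hA, integral_ite_mem P hB, hPBr]
    field_simp
    ring
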